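/- Let E be a real normed space, a ≥ 0, b < 0, and Y ∈ E. Then there exists a unique X ∈ E with (1 + a·exp(-‖X‖/b)) • X = Y. -/

import Mathlib

open Real

theorem stmt_18 {E : Type*} [NormedAddCommGroup E] [NormedSpace ℝ E]
    (a b : ℝ) (ha : 0 ≤ a) (hb : b < 0) (Y : E) :
    ∃! X : E, (1 + a * Real.exp (-‖X‖ / b)) • X = Y := by
  set c : ℝ → ℝ := fun t => 1 + a * Real.exp (-t / b) with hc_def
  have hc_pos : ∀ t, 0 < c t := fun t => by
    have : 0 ≤ a * Real.exp (-t / b) := mul_nonneg ha (Real.exp_pos _).le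
    simp only [hc_def]; linarith
  have hc_one : ∀ t, 1 ≤ c t := fun t => by
    have : 0 ≤ a * Real.exp (-t / b) := mul_nonneg ha (Real.exp_pos _).le
    simp only [hc_def]; linarith
  have hc_mono : ∀ s t : ℝ, s ≤ t → c s ≤ c t := by
    intro s t hst
    have h1 : -s / b ≤ -t / b := by
      have hbi : b⁻¹ < 0 := inv_lt_zero.mpr hb
      simp only [div_eq_mul_inv]; nlinarith
    simp only [hc_def]
    have := Real.exp_le_exp.mpr h1
    nlinarith [Real.exp_pos (-s/b)]
  set g : ℝ → ℝ := fun t => c t * t with hg_def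
  have hg_mono : StrictMonoOn g (Set.Ici 0) := by
    intro s hs t ht hst
    have hcs := hc_mono s t hst.le
    have := hc_pos t
    simp only [hg_def]
    calc c s * s ≤ c t * s := by nlinarith [Set.mem_Ici.mp hs]
    _ < c t * t := by nlinarith
  have hg_cont : Continuous g := by
    apply Continuous.mul _ continuous_id
    exact continuous_const.add (continuous_const.mul ((continuous_id.neg.div_const b).rexp))
  -- surjectivity onto [0, ∞): find r with g r = ‖Y‖
  have h0 : g 0 = 0 := by simp [hg_def]
  have hbig : ‖Y‖ ≤ g ‖Y‖ := by
    have := hc_one ‖Y‖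
    have := norm_nonneg Y
    simp only [hg_def]; nlinarith
  obtain ⟨r, hr_mem, hr⟩ : ∃ r ∈ Set.Icc (0:ℝ) ‖Y‖, g r = ‖Y‖ := by
    have hsub := intermediate_value_Icc (norm_nonneg Y) hg_cont.continuousOn
    have : ‖Y‖ ∈ Set.Icc (g 0) (g ‖Y‖) := by
      rw [h0]; exact ⟨norm_nonneg Y, hbig⟩
    obtain ⟨r, hr1, hr2⟩ := hsub this
    exact ⟨r, hr1, hr2⟩
  have hr0 : 0 ≤ r := hr_mem.1
  refine ⟨(c r)⁻¹ • Y, ?_, ?_⟩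
  · show (1 + a * Real.exp (-‖(c r)⁻¹ • Y‖ / b)) • ((c r)⁻¹ • Y) = Y
    have hnorm : ‖(c r)⁻¹ • Y‖ = r := by
      rw [norm_smul, Real.norm_eq_abs, abs_inv, abs_of_pos (hc_pos r)]
      field_simp
      rw [← hr]; simp only [hg_def]; rw [mul_comm (c r) r]; exact mul_div_cancel_right₀ r (hc_pos r).ne'
    rw [hnorm, smul_smul]
    rw [show (1 + a * Real.exp (-r / b)) = c r from rfl]
    rw [mul_inv_cancel₀ (hc_pos r).ne', one_smul]
  · intro X hX
    have hXc : c ‖X‖ • X = Y := hX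
    have hXn : g ‖X‖ = ‖Y‖ := by
      rw [← hXc, norm_smul, Real.norm_eq_abs, abs_of_pos (hc_pos _)]
    have heq : ‖X‖ = r := hg_mono.injOn (Set.mem_Ici.mpr (norm_nonneg X))
      (Set.mem_Ici.mpr hr0) (hXn.trans hr.symm)
    rw [← hXc, heq, smul_smul, inv_mul_cancel₀ (hc_pos r).ne', one_smul]
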